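/- Tsallis policy improvement: let π_{k+1}(·|s) maximize E_{a~π}[Q_q^{π_k}(s,a) - ln_q(π(a|s))] over probability distributions on A for each s. Then Q_q^{π_{k+1}}(s,a) ≥ Q_q^{π_k}(s,a) for all (s,a). -/

import Mathlib

open Real Finset

noncomputable def qlog (q x : ℝ) : ℝ :=
  if q = 1 then Real.log x else (x ^ (q - 1) - 1) / (q - 1)

noncomputable def qexp (q x : ℝ) : ℝ :=
  if q = 1 then Real.exp x else (max (1 + (q - 1) * x) 0) ^ (1 / (q - 1))

/-- The summand `-p · ln_q p` with the convention `0 · ln_q 0 = 0`. -/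
noncomputable def entTerm (q p : ℝ) : ℝ := if p = 0 then 0 else -p * qlog q p

def IsPmf {X : Type*} [Fintype X] (P : X → ℝ) : Prop :=
  (∀ x, 0 ≤ P x) ∧ ∑ x, P x = 1

/-- Tsallis entropy. -/
noncomputable def Sq {X : Type*} [Fintype X] (q : ℝ) (P : X → ℝ) : ℝ :=
  ∑ x, entTerm q (P x)

/-- The q-maximum operator. -/
noncomputable def qmax {X : Type*} [Fintype X] (q : ℝ) (f : X → ℝ) : ℝ :=
  sSup {y | ∃ P : X → ℝ, IsPmf P ∧ y = (∑ x, P x * f x) + Sq q P}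

/-- The Tsallis Bellman expectation operator. -/
noncomputable def TBE {St A : Type*} [Fintype St] [Fintype A] (q γ : ℝ)
    (P : St → A → St → ℝ) (r : St → A → St → ℝ) (pol : St → A → ℝ)
    (F : St → A → ℝ) : St → A → ℝ :=
  fun s a => ∑ s', P s a s' *
    (r s a s' + γ * ∑ a', (pol s' a' * F s' a' + entTerm q (pol s' a')))

theorem stmt19 {St A : Type*} [Fintype St] [Fintype A] [Nonempty St] [Nonempty A]
    (q γ : ℝ) (hq : 0 < q) (hγ0 : 0 < γ) (hγ1 : γ < 1)
    (P : St → A → St → ℝ) (hP : ∀ s a, IsPmf (P s a))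
    (r : St → A → St → ℝ)
    (pk pk1 : St → A → ℝ) (hpk : ∀ s, IsPmf (pk s)) (hpk1 : ∀ s, IsPmf (pk1 s))
    (Qk Qk1 : St → A → ℝ)
    (hQk : TBE q γ P r pk Qk = Qk)
    (hQk1 : TBE q γ P r pk1 Qk1 = Qk1)
    (himp : ∀ s, ∀ μ : A → ℝ, IsPmf μ →
      (∑ a, μ a * Qk s a) + Sq q μ ≤ (∑ a, pk1 s a * Qk s a) + Sq q (pk1 s)) :
    ∀ s a, Qk s a ≤ Qk1 s a := by
  classical
  have hne : (Finset.univ : Finset (St × A)).Nonempty := Finset.univ_nonempty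
  set M := Finset.univ.sup' hne (fun p : St × A => Qk p.1 p.2 - Qk1 p.1 p.2) with hMdef
  have hDM : ∀ s a, Qk s a - Qk1 s a ≤ M := fun s a =>
    Finset.le_sup' (fun p : St × A => Qk p.1 p.2 - Qk1 p.1 p.2) (Finset.mem_univ (s, a))
  have key : ∀ s a, Qk s a - Qk1 s a ≤ γ * M := by
    intro s a
    have h1 : Qk s a ≤ TBE q γ P r pk1 Qk s a := by
      conv_lhs => rw [← hQk]
      unfold TBE
      apply Finset.sum_le_sum
      intro s' _
      apply mul_le_mul_of_nonneg_left _ ((hP s a).1 s')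
      apply add_le_add_right
      apply mul_le_mul_of_nonneg_left _ (le_of_lt hγ0)
      have h := himp s' (pk s') (hpk s')
      simpa [Sq, Finset.sum_add_distrib] using h
    have h2 : TBE q γ P r pk1 Qk s a ≤ Qk1 s a + γ * M := by
      conv_rhs => rw [← hQk1]
      unfold TBE
      have hsum : ∑ s', P s a s' = 1 := (hP s a).2
      rw [show (γ * M) = ∑ s', P s a s' * (γ * M) by
        rw [← Finset.sum_mul, hsum, one_mul]]
      rw [← Finset.sum_add_distrib]
      apply Finset.sum_le_sum
      intro s' _
      rw [← mul_add]
      apply mul_le_mul_of_nonneg_left _ ((hP s a).1 s')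
      rw [add_assoc]
      apply add_le_add_right
      rw [← mul_add]
      apply mul_le_mul_of_nonneg_left _ (le_of_lt hγ0)
      have hsum1 : ∑ a', pk1 s' a' = 1 := (hpk1 s').2
      rw [show (M : ℝ) = ∑ a', pk1 s' a' * M by rw [← Finset.sum_mul, hsum1, one_mul]]
      rw [← Finset.sum_add_distrib]
      apply Finset.sum_le_sum
      intro a' _
      have hp0 := (hpk1 s').1 a'
      have hd := hDM s' a'
      nlinarith
    linarith
  have hM0 : M ≤ 0 := by
    obtain ⟨p, _, hp⟩ := Finset.exists_mem_eq_sup' hne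
      (fun p : St × A => Qk p.1 p.2 - Qk1 p.1 p.2)
    have hk := key p.1 p.2
    have hMe : M = Qk p.1 p.2 - Qk1 p.1 p.2 := hp
    nlinarith
  intro s a
  have := hDM s a
  linarith
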